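/- Let r be a Hoehnke radical on S-acts. For each S-act A and subact B ≤ A, define c^r_A(B) = π⁻¹([B]_{r(A/B)}), where π: A → A/B is the projection onto the Rees quotient and [B]_{r(A/B)} is the r(A/B)-class of the point that B collapses to. Then c^r is a closure operator: (1) B ≤ c^r_A(B); (2) B₁ ≤ B₂ ≤ A implies c^r_A(B₁) ≤ c^r_A(B₂); (3) for every homomorphism f: A → C of S-acts, f(c^r_A(B)) ≤ c^r_C(f(B)). Moreover c^r is idempotent: c^r_A(c^r_A(B)) = c^r_A(B). -/
import Mathlib


universe u

variable {S : Type u} [Monoid S]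

/-- An `S`-act homomorphism (equivariant map). -/
def IsActHom (S : Type u) [Monoid S] {A B : Type u} [MulAction S A] [MulAction S B]
    (f : A → B) : Prop :=
  ∀ (s : S) (a : A), f (s • a) = s • f a

/-- A subact: a nonempty subset closed under the action. -/
def IsSubact (S : Type u) [Monoid S] {A : Type u} [MulAction S A] (B : Set A) : Prop :=
  B.Nonempty ∧ ∀ (s : S), ∀ a ∈ B, s • a ∈ B

/-- A congruence on an `S`-act: an equivalence relation compatible with the action. -/
structure ActCong (S : Type u) [Monoid S] (A : Type u) [MulAction S A] where
  r : A → A → Prop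
  iseqv : Equivalence r
  compat : ∀ (s : S) (a b : A), r a b → r (s • a) (s • b)

def ActCong.toSetoid {A : Type u} [MulAction S A] (χ : ActCong S A) : Setoid A :=
  ⟨χ.r, χ.iseqv⟩

instance actQuotSMul {A : Type u} [MulAction S A] (χ : ActCong S A) :
    SMul S (Quotient χ.toSetoid) :=
  ⟨fun s => Quotient.map (fun a => s • a) (fun a b h => χ.compat s a b h)⟩

instance actQuotMulAction {A : Type u} [MulAction S A] (χ : ActCong S A) :
    MulAction S (Quotient χ.toSetoid) where
  one_smul := by
    intro x
    induction x using Quotient.inductionOn with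
    | h a => exact congrArg (Quotient.mk χ.toSetoid) (one_smul S a)
  mul_smul := by
    intro s t x
    induction x using Quotient.inductionOn with
    | h a => exact congrArg (Quotient.mk χ.toSetoid) (mul_smul s t a)

/-- The Rees congruence determined by an action-closed subset `B`. -/
def reesCong {A : Type u} [MulAction S A] (B : Set A)
    (hB : ∀ (s : S), ∀ a ∈ B, s • a ∈ B) : ActCong S A where
  r a b := a = b ∨ (a ∈ B ∧ b ∈ B)
  iseqv := by
    constructor
    · exact fun a => Or.inl rfl
    · rintro a b (rfl | ⟨h1, h2⟩)
      exacts [Or.inl rfl, Or.inr ⟨h2, h1⟩]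
    · rintro a b c (rfl | ⟨h1, h2⟩) h
      · exact h
      · rcases h with rfl | ⟨h3, h4⟩
        exacts [Or.inr ⟨h1, h2⟩, Or.inr ⟨h1, h4⟩]
  compat := by
    rintro s a b (rfl | ⟨h1, h2⟩)
    exacts [Or.inl rfl, Or.inr ⟨hB s a h1, hB s b h2⟩]

/-- A Hoehnke radical on `S`-acts. -/
structure HoehnkeRadical (S : Type u) [Monoid S] : Type (u + 1) where
  rad : ∀ (A : Type u) [MulAction S A], ActCong S A
  functorial : ∀ {A B : Type u} [MulAction S A] [MulAction S B] (f : A → B),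
    IsActHom S f → ∀ a a' : A, (rad A).r a a' → (rad B).r (f a) (f a')
  radQuot : ∀ (A : Type u) [MulAction S A],
    ∀ x y : Quotient (rad A).toSetoid, (rad (Quotient (rad A).toSetoid)).r x y → x = y

/-- The closure `c^r_A(B)`: preimage of the `r(A/B)`-class of the collapsed point `B`. -/
def rClosure (r : HoehnkeRadical S) {A : Type u} [MulAction S A] (B : Set A)
    (hB : ∀ (s : S), ∀ a ∈ B, s • a ∈ B) : Set A :=
  {a : A | ∃ b ∈ B, (r.rad (Quotient (reesCong B hB).toSetoid)).r
      (Quotient.mk (reesCong B hB).toSetoid a) (Quotient.mk (reesCong B hB).toSetoid b)}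

/-- `B` is `r`-dense in `A`: the Rees quotient `A/B` is a radical act, `r(A/B) = ∇`. -/
def IsRDense (r : HoehnkeRadical S) {A : Type u} [MulAction S A] (B : Set A)
    (hB : ∀ (s : S), ∀ a ∈ B, s • a ∈ B) : Prop :=
  ∀ x y : Quotient (reesCong B hB).toSetoid, (r.rad (Quotient (reesCong B hB).toSetoid)).r x y

theorem image_closed {A C : Type u} [MulAction S A] [MulAction S C] {f : A → C}
    (hf : IsActHom S f) {B : Set A} (hB : ∀ (s : S), ∀ a ∈ B, s • a ∈ B) :
    ∀ (s : S), ∀ c ∈ f '' B, s • c ∈ f '' B := by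
  rintro s c ⟨a, ha, rfl⟩
  exact ⟨s • a, hB s a ha, hf s a⟩

theorem range_closed {A C : Type u} [MulAction S A] [MulAction S C] {f : A → C}
    (hf : IsActHom S f) :
    ∀ (s : S), ∀ c ∈ Set.range f, s • c ∈ Set.range f := by
  rintro s c ⟨a, rfl⟩
  exact ⟨s • a, hf s a⟩

theorem rClosure_closed (r : HoehnkeRadical S) {A : Type u} [MulAction S A]
    (B : Set A) (hB : ∀ (s : S), ∀ a ∈ B, s • a ∈ B) :
    ∀ (s : S), ∀ a ∈ rClosure r B hB, s • a ∈ rClosure r B hB := by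
  rintro s a ⟨b, hb, hab⟩
  exact ⟨s • b, hB s b hb, (r.rad _).compat s _ _ hab⟩

/-- The join of two congruences. -/
def congJoin {A : Type u} [MulAction S A] (τ₁ τ₂ : ActCong S A) : ActCong S A where
  r a b := ∀ θ : ActCong S A, (∀ x y, τ₁.r x y → θ.r x y) → (∀ x y, τ₂.r x y → θ.r x y) → θ.r a b
  iseqv := by
    constructor
    · exact fun a θ _ _ => θ.iseqv.refl a
    · exact fun h θ h1 h2 => θ.iseqv.symm (h θ h1 h2)
    · exact fun h h' θ h1 h2 => θ.iseqv.trans (h θ h1 h2) (h' θ h1 h2)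
  compat := fun s a b h θ h1 h2 => θ.compat s a b (h θ h1 h2)

/-- For `κ ≤ τ` the induced congruence `τ/κ` on the quotient `A/κ`. -/
def quotCong {A : Type u} [MulAction S A] (κ τ : ActCong S A)
    (h : ∀ a b, κ.r a b → τ.r a b) : ActCong S (Quotient κ.toSetoid) where
  r x y := ∃ a b : A, x = Quotient.mk κ.toSetoid a ∧ y = Quotient.mk κ.toSetoid b ∧ τ.r a b
  iseqv := by
    constructor
    · intro x
      obtain ⟨a, rfl⟩ := Quotient.exists_rep x
      exact ⟨a, a, rfl, rfl, τ.iseqv.refl a⟩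
    · rintro x y ⟨a, b, rfl, rfl, hab⟩
      exact ⟨b, a, rfl, rfl, τ.iseqv.symm hab⟩
    · rintro x y z ⟨a, b, rfl, hy, hab⟩ ⟨b', c, hy', rfl, hbc⟩
      refine ⟨a, c, rfl, rfl, τ.iseqv.trans hab (τ.iseqv.trans ?_ hbc)⟩
      exact h _ _ (Quotient.exact (hy.symm.trans hy'))
  compat := by
    rintro s x y ⟨a, b, rfl, rfl, hab⟩
    exact ⟨s • a, s • b, rfl, rfl, τ.compat s a b hab⟩

/-- The smallest extension of an on-`B` congruence `χ` to the whole act. -/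
def extCong {A : Type u} [MulAction S A] (χ : A → A → Prop)
    (hsymm : ∀ a b, χ a b → χ b a) (htrans : ∀ a b c, χ a b → χ b c → χ a c)
    (hcompat : ∀ (s : S) (a b : A), χ a b → χ (s • a) (s • b)) : ActCong S A where
  r a b := a = b ∨ χ a b
  iseqv := by
    constructor
    · exact fun a => Or.inl rfl
    · rintro a b (rfl | h)
      exacts [Or.inl rfl, Or.inr (hsymm _ _ h)]
    · rintro a b c (rfl | h) h'
      · exact h'
      · rcases h' with rfl | h'
        exacts [Or.inr h, Or.inr (htrans _ _ _ h h')]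
  compat := by
    rintro s a b (rfl | h)
    exacts [Or.inl rfl, Or.inr (hcompat s a b h)]

theorem rClosure_is_idempotent_closure_operator {S : Type u} [Monoid S]
    (r : HoehnkeRadical S) {A : Type u} [MulAction S A]
    (B : Set A) (hB : IsSubact S B) :
    B ⊆ rClosure r B hB.2 ∧
    (∀ (B₁ B₂ : Set A) (h1 : IsSubact S B₁) (h2 : IsSubact S B₂), B₁ ⊆ B₂ →
      rClosure r B₁ h1.2 ⊆ rClosure r B₂ h2.2) ∧
    (∀ (C : Type u) [MulAction S C] (f : A → C) (hf : IsActHom S f),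
      f '' rClosure r B hB.2 ⊆ rClosure r (f '' B) (image_closed hf hB.2)) ∧
    rClosure r (rClosure r B hB.2) (rClosure_closed r B hB.2) = rClosure r B hB.2 := by
  have hext : ∀ (B' : Set A) (hB' : ∀ (s : S), ∀ a ∈ B', s • a ∈ B'),
      B' ⊆ rClosure r B' hB' := by
    intro B' hB' b hb
    exact ⟨b, hb, (r.rad _).iseqv.refl _⟩
  have hmono : ∀ (B₁ B₂ : Set A) (h1 : IsSubact S B₁) (h2 : IsSubact S B₂), B₁ ⊆ B₂ →
      rClosure r B₁ h1.2 ⊆ rClosure r B₂ h2.2 := by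
    intro B₁ B₂ h1 h2 hsub a ha
    obtain ⟨b, hb, hab⟩ := ha
    set g : Quotient (reesCong B₁ h1.2).toSetoid → Quotient (reesCong B₂ h2.2).toSetoid :=
      Quotient.map id (by
        rintro x y (rfl | ⟨hx, hy⟩)
        exacts [Or.inl rfl, Or.inr ⟨hsub hx, hsub hy⟩]) with hg
    have ghom : IsActHom S g := by
      intro s x
      induction x using Quotient.inductionOn with
      | h a => rfl
    have := r.functorial g ghom _ _ hab
    exact ⟨b, hsub hb, this⟩
  refine ⟨hext B hB.2, hmono, ?_, ?_⟩
  · intro C _ f hf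
    rintro _ ⟨a, ⟨b, hb, hab⟩, rfl⟩
    set g : Quotient (reesCong B hB.2).toSetoid →
        Quotient (reesCong (f '' B) (image_closed hf hB.2)).toSetoid :=
      Quotient.map f (by
        rintro x y (rfl | ⟨hx, hy⟩)
        exacts [Or.inl rfl, Or.inr ⟨⟨x, hx, rfl⟩, ⟨y, hy, rfl⟩⟩]) with hg
    have ghom : IsActHom S g := by
      intro s x
      induction x using Quotient.inductionOn with
      | h a => exact congrArg (Quotient.mk _) (hf s a)
    have := r.functorial g ghom _ _ hab
    exact ⟨f b, ⟨b, hb, rfl⟩, this⟩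
  · set B' := rClosure r B hB.2 with hB'def
    refine Set.Subset.antisymm ?_ (hext B' (rClosure_closed r B hB.2))
    intro a ha
    obtain ⟨b', hb', hab'⟩ := ha
    -- notation
    set ρ := r.rad (Quotient (reesCong B hB.2).toSetoid) with hρ
    set ψ : A → Quotient ρ.toSetoid :=
      fun x => Quotient.mk ρ.toSetoid (Quotient.mk (reesCong B hB.2).toSetoid x) with hψ
    -- two elements of B' have ρ-related images
    have key : ∀ x ∈ B', ∀ y ∈ B', ρ.r (Quotient.mk (reesCong B hB.2).toSetoid x)
        (Quotient.mk (reesCong B hB.2).toSetoid y) := by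
      rintro x ⟨bx, hbx, hx⟩ y ⟨by', hby, hy⟩
      have hbxy : (Quotient.mk (reesCong B hB.2).toSetoid bx : Quotient _) =
          Quotient.mk (reesCong B hB.2).toSetoid by' :=
        Quotient.sound (Or.inr ⟨hbx, hby⟩)
      refine ρ.iseqv.trans hx ?_
      rw [hbxy]
      exact ρ.iseqv.symm hy
    set g : Quotient (reesCong B' (rClosure_closed r B hB.2)).toSetoid →
        Quotient ρ.toSetoid :=
      Quotient.lift ψ (by
        rintro x y (rfl | ⟨hx, hy⟩)
        · rfl
        · exact Quotient.sound (key x hx y hy)) with hg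
    have ghom : IsActHom S g := by
      intro s x
      induction x using Quotient.inductionOn with
      | h a => rfl
    have h1 := r.functorial g ghom _ _ hab'
    have h2 : ψ a = ψ b' := r.radQuot _ _ _ h1
    have h3 : ρ.r (Quotient.mk (reesCong B hB.2).toSetoid a)
        (Quotient.mk (reesCong B hB.2).toSetoid b') := Quotient.exact h2
    obtain ⟨b, hb, hb'b⟩ := hb'
    exact ⟨b, hb, ρ.iseqv.trans h3 hb'b⟩
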